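/- If n is odd, the map μ : R[x]/⟨xⁿ-1⟩ → R[x]/⟨xⁿ-(1-2u²)⟩ induced by c(x) ↦ c((1-2u²)x) is a well-defined ring isomorphism. -/

import Mathlib

open Polynomial

abbrev Rp (p : ℕ) := AdjoinRoot (X ^ 3 - X : (ZMod p)[X])
noncomputable def uu (p : ℕ) : Rp p := AdjoinRoot.root _
noncomputable def lam (p : ℕ) : Rp p := 1 - 2 * uu p ^ 2

lemma lam_sq (p : ℕ) : lam p ^ 2 = 1 := by
  have hu : uu p ^ 3 = uu p := by
    have h := AdjoinRoot.eval₂_root (X ^ 3 - X : (ZMod p)[X])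
    simp only [eval₂_sub, eval₂_pow, eval₂_X, sub_eq_zero] at h
    exact h
  unfold lam
  linear_combination (4 * uu p) * hu

lemma lam_pow (p : ℕ) {n : ℕ} (hn : Odd n) : lam p ^ n = lam p := by
  obtain ⟨k, rfl⟩ := hn
  rw [pow_add, pow_mul, lam_sq, one_pow, one_mul, pow_one]

theorem mu_ring_iso (p n : ℕ) [Fact p.Prime] (hp : p ≠ 2) (hn : Odd n) :
    ∃ e : ((Rp p)[X] ⧸ Ideal.span {(X : (Rp p)[X]) ^ n - 1}) ≃+*
          ((Rp p)[X] ⧸ Ideal.span {(X : (Rp p)[X]) ^ n - C (lam p)}),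
      ∀ f : (Rp p)[X],
        e (Ideal.Quotient.mk _ f) = Ideal.Quotient.mk _ (f.comp (C (lam p) * X)) := by
  set I1 : Ideal ((Rp p)[X]) := Ideal.span {(X : (Rp p)[X]) ^ n - 1} with hI1
  set I2 : Ideal ((Rp p)[X]) := Ideal.span {(X : (Rp p)[X]) ^ n - C (lam p)} with hI2
  have hC2 : (C (lam p) : (Rp p)[X]) * C (lam p) = 1 := by
    rw [← C_mul, ← pow_two, lam_sq, C_1]
  have hCn : (C (lam p) : (Rp p)[X]) ^ n = C (lam p) := by
    rw [← C_pow, lam_pow p hn]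
  let g : (Rp p)[X] →+* (Rp p)[X] := eval₂RingHom C (C (lam p) * X)
  have hg : ∀ f : (Rp p)[X], g f = f.comp (C (lam p) * X) := fun f => rfl
  let φ : (Rp p)[X] →+* (Rp p)[X] ⧸ I2 := (Ideal.Quotient.mk I2).comp g
  let ψ : (Rp p)[X] →+* (Rp p)[X] ⧸ I1 := (Ideal.Quotient.mk I1).comp g
  have hφ : I1 ≤ RingHom.ker φ := by
    rw [hI1, Ideal.span_le]
    intro x hx
    simp only [Set.mem_singleton_iff] at hx
    subst hx
    simp only [SetLike.mem_coe, RingHom.mem_ker, RingHom.comp_apply, φ, g,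
      coe_eval₂RingHom, eval₂_sub, eval₂_pow, eval₂_X, eval₂_one]
    rw [Ideal.Quotient.eq_zero_iff_mem]
    have : (C (lam p) * X : (Rp p)[X]) ^ n - 1
        = C (lam p) * ((X : (Rp p)[X]) ^ n - C (lam p)) := by
      rw [mul_pow, hCn, mul_sub, hC2]
    rw [this, hI2]
    exact Ideal.mul_mem_left _ _ (Ideal.subset_span rfl)
  have hψ : I2 ≤ RingHom.ker ψ := by
    rw [hI2, Ideal.span_le]
    intro x hx
    simp only [Set.mem_singleton_iff] at hx
    subst hx
    simp only [SetLike.mem_coe, RingHom.mem_ker, RingHom.comp_apply, ψ, g,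
      coe_eval₂RingHom, eval₂_sub, eval₂_pow, eval₂_X, eval₂_C]
    rw [Ideal.Quotient.eq_zero_iff_mem]
    have : (C (lam p) * X : (Rp p)[X]) ^ n - C (lam p)
        = C (lam p) * ((X : (Rp p)[X]) ^ n - 1) := by
      rw [mul_pow, hCn, mul_sub, mul_one]
    rw [this, hI1]
    exact Ideal.mul_mem_left _ _ (Ideal.subset_span rfl)
  let e1 := Ideal.Quotient.lift I1 φ fun a ha => RingHom.mem_ker.mp (hφ ha)
  let e2 := Ideal.Quotient.lift I2 ψ fun a ha => RingHom.mem_ker.mp (hψ ha)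
  have key : ∀ (J : Ideal ((Rp p)[X])), g (g X) - X ∈ J := by
    intro J
    have : g (g X) = X := by
      simp only [g, coe_eval₂RingHom, eval₂_X, eval₂_mul, eval₂_C]
      rw [← mul_assoc, hC2, one_mul]
    rw [this, sub_self]; exact J.zero_mem
  have h12 : e2.comp e1 = RingHom.id _ := by
    apply Ideal.Quotient.ringHom_ext
    apply Polynomial.ringHom_ext
    · intro a
      simp [e1, e2, φ, ψ, g]
    · show e2 (e1 (Ideal.Quotient.mk I1 X)) = Ideal.Quotient.mk I1 X
      simp only [e1, e2, Ideal.Quotient.lift_mk, RingHom.comp_apply, φ, ψ]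
      rw [Ideal.Quotient.eq]
      exact key I1
  have h21 : e1.comp e2 = RingHom.id _ := by
    apply Ideal.Quotient.ringHom_ext
    apply Polynomial.ringHom_ext
    · intro a
      simp [e1, e2, φ, ψ, g]
    · show e1 (e2 (Ideal.Quotient.mk I2 X)) = Ideal.Quotient.mk I2 X
      simp only [e1, e2, Ideal.Quotient.lift_mk, RingHom.comp_apply, φ, ψ]
      rw [Ideal.Quotient.eq]
      exact key I2
  refine ⟨RingEquiv.ofRingHom e1 e2 ?_ ?_, ?_⟩
  · exact h21
  · exact h12
  · intro f
    show e1 (Ideal.Quotient.mk I1 f) = _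
    rw [Ideal.Quotient.lift_mk, RingHom.comp_apply, hg]
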